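/- For the Dolbeault-type estimate on power series: if A(t) = ∑_{n≥1} k (ct)^n / n^2 with k, c > 0, then for all n ≥ 1 the coefficients a_n = k c^n / n^2 satisfy (1/(16k)) ∑_{i=1}^n a_i a_{n+1-i} ≤ a_{n+1}. -/

import Mathlib

open Finset

lemma basel_bound : ∀ n : ℕ, 1 ≤ n → ∑ i ∈ Icc 1 n, (1:ℝ)/(i:ℝ)^2 ≤ 2 - 1/(n:ℝ) := by
  intro n hn
  induction n with
  | zero => omega
  | succ m ih =>
    rcases Nat.lt_or_ge m 1 with h | h
    · interval_cases m
      norm_num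
    · rw [Finset.sum_Icc_succ_top (by omega)]
      have hM : (1:ℝ) ≤ (m:ℝ) := by exact_mod_cast h
      have := ih h
      have key : (1:ℝ)/((m+1:ℕ):ℝ)^2 ≤ 1/(m:ℝ) - 1/((m:ℝ)+1) := by
        push_cast
        rw [div_sub_div _ _ (by linarith) (by linarith), div_le_div_iff₀ (by positivity) (by positivity)]
        nlinarith
      push_cast
      push_cast at this key
      linarith

lemma sym_sum (n : ℕ) (f : ℕ → ℝ) :
    ∑ i ∈ Icc 1 n, f (n + 1 - i) = ∑ i ∈ Icc 1 n, f i := by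
  apply Finset.sum_nbij' (fun i => n + 1 - i) (fun i => n + 1 - i) <;>
    intros a ha <;> simp_all [Finset.mem_Icc] <;> omega

theorem kodaira_coefficient_estimate (k c : ℝ) (hk : 0 < k) (hc : 0 < c)
    (n : ℕ) (hn : 1 ≤ n) :
    (1 / (16 * k)) * ∑ i ∈ Finset.Icc 1 n,
        (k * c ^ i / (i : ℝ) ^ 2) * (k * c ^ (n + 1 - i) / ((n + 1 - i : ℕ) : ℝ) ^ 2)
      ≤ k * c ^ (n + 1) / ((n : ℝ) + 1) ^ 2 := by
  have hS : ∑ i ∈ Icc 1 n, (1:ℝ)/((i:ℝ)^2 * ((n+1-i:ℕ):ℝ)^2) ≤ 16/((n:ℝ)+1)^2 := by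
    have step1 : ∀ i ∈ Icc 1 n, (1:ℝ)/((i:ℝ)^2 * ((n+1-i:ℕ):ℝ)^2)
        ≤ 2/((n:ℝ)+1)^2 * (1/(i:ℝ)^2 + 1/((n+1-i:ℕ):ℝ)^2) := by
      intro i hi
      simp only [mem_Icc] at hi
      set j : ℕ := n + 1 - i with hj
      have hI : (1:ℝ) ≤ (i:ℝ) := by exact_mod_cast hi.1
      have hJ : (1:ℝ) ≤ (j:ℝ) := by
        have : 1 ≤ j := by omega
        exact_mod_cast this
      have hij : (i:ℝ) + (j:ℝ) = (n:ℝ) + 1 := by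
        have : i + j = n + 1 := by omega
        exact_mod_cast this
      rw [← hij]
      rw [div_add_div _ _ (by positivity) (by positivity), div_mul_div_comm,
        div_le_div_iff₀ (by positivity) (by positivity)]
      nlinarith [sq_nonneg ((i:ℝ) - j), sq_nonneg ((i:ℝ)*j), mul_pos (by linarith : (0:ℝ) < (i:ℝ)) (by linarith : (0:ℝ) < (j:ℝ)), sq_nonneg ((i:ℝ)*(i:ℝ) - (j:ℝ)*(j:ℝ))]
    calc ∑ i ∈ Icc 1 n, (1:ℝ)/((i:ℝ)^2 * ((n+1-i:ℕ):ℝ)^2)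
        ≤ ∑ i ∈ Icc 1 n, 2/((n:ℝ)+1)^2 * (1/(i:ℝ)^2 + 1/((n+1-i:ℕ):ℝ)^2) :=
          Finset.sum_le_sum step1
      _ = 2/((n:ℝ)+1)^2 * (∑ i ∈ Icc 1 n, 1/(i:ℝ)^2 + ∑ i ∈ Icc 1 n, 1/((n+1-i:ℕ):ℝ)^2) := by
          rw [← Finset.mul_sum, Finset.sum_add_distrib]
      _ = 2/((n:ℝ)+1)^2 * (2 * ∑ i ∈ Icc 1 n, 1/(i:ℝ)^2) := by
          rw [sym_sum n (fun i => 1/(i:ℝ)^2)]; ring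
      _ ≤ 2/((n:ℝ)+1)^2 * (2 * 2) := by
          have hb := basel_bound n hn
          have hnp : (0:ℝ) < (n:ℝ) := by exact_mod_cast hn
          have : ∑ i ∈ Icc 1 n, (1:ℝ)/(i:ℝ)^2 ≤ 2 := by
            have : (0:ℝ) < 1/(n:ℝ) := by positivity
            linarith
          gcongr
      _ ≤ 16/((n:ℝ)+1)^2 := by
          rw [div_mul_eq_mul_div]
          gcongr <;> norm_num
  have hterm : ∀ i ∈ Icc 1 n,
      (k * c ^ i / (i : ℝ) ^ 2) * (k * c ^ (n + 1 - i) / ((n + 1 - i : ℕ) : ℝ) ^ 2)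
      = k^2 * c^(n+1) * ((1:ℝ)/((i:ℝ)^2 * ((n+1-i:ℕ):ℝ)^2)) := by
    intro i hi
    simp only [mem_Icc] at hi
    have hcc : c ^ i * c ^ (n + 1 - i) = c ^ (n+1) := by
      rw [← pow_add]; congr 1; omega
    rw [div_mul_div_comm, mul_mul_mul_comm, hcc, ← mul_one_div]; ring
  rw [Finset.sum_congr rfl hterm, ← Finset.mul_sum]
  have hpos : 0 ≤ k^2 * c^(n+1) := by positivity
  calc (1 / (16 * k)) * (k^2 * c^(n+1) * ∑ i ∈ Icc 1 n, (1:ℝ)/((i:ℝ)^2 * ((n+1-i:ℕ):ℝ)^2))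
      ≤ (1 / (16 * k)) * (k^2 * c^(n+1) * (16/((n:ℝ)+1)^2)) := by
        have h16 : (0:ℝ) ≤ 1/(16*k) := by positivity
        exact mul_le_mul_of_nonneg_left (mul_le_mul_of_nonneg_left hS hpos) h16
    _ = k * c ^ (n + 1) / ((n : ℝ) + 1) ^ 2 := by
        have hne : k ≠ 0 := ne_of_gt hk
        field_simp
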